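/- There exist absolute constants c₁, c₂, c₃ > 0 such that the following holds. Let n ≥ 1, t > 0, let C ∈ ℝ^{n×n} have positive entries, let K ≥ 1, γ ∈ (0, K], 0 < η ≤ c₁·γ/K², let R be an integer with R ≥ c₂·ln(2n²)/(η·γ), and let χ ∈ (0,1) with χ ≤ c₃·γ/(R·K). Consider the multiplicative weights update: (α¹,β¹) = (0,0) ∈ ℤⁿ×ℤⁿ; for r = 1,…,R−1, let (D^r, P^r) be rounded duals of (α^r, β^r) with weights w^r and let λ^r be the distribution proportional to w^r; let (α̃^r, β̃^r) ∈ ℤⁿ×ℤⁿ be any vectors satisfying, with ṽ^r = (1/t)·(Σᵢ α̃^r_i − Σⱼ β̃^r_j): (i) Σ_{i,j,σ} λ^r_{i,j,σ}·σ·(α̃^r_i − β̃^r_j)/C_{ij} ≤ ṽ^r − γ, (ii) |α̃^r_i − β̃^r_j| ≤ K·C_{ij} for all i,j, and (iii) |ṽ^r| ≤ K; and set (α^{r+1}, β^{r+1}) = (α^r + α̃^r, β^r + β̃^r). Then (α, β) := (1/R)·(α^R, β^R) satisfies (1/t)·(Σᵢ αᵢ − Σⱼ βⱼ) − max_{i,j}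 |αᵢ − βⱼ|/C_{ij} ≥ γ/10; in particular (α,β) ∈ Γ_t := {(α,β) ∈ ℝⁿ×ℝⁿ : (1/t)·(Σᵢ αᵢ − Σⱼ βⱼ) − max_{i,j} |αᵢ − βⱼ|/C_{ij} > 0}. -/

import Mathlib

open Finset

/-- `(D, P)` is a rounded-dual pair for `(α, β)` with rounding parameter `χ`. -/
def IsRoundedDual {n : ℕ} (χ : ℝ) (α β : Fin n → ℤ)
    (D P : Fin n → Fin n → ℝ) : Prop :=
  (∀ i j, D i j = 0 ∨ ∃ h : ℕ, D i j = (1 + χ) ^ h) ∧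
  (∀ i j, D i j ≤ |(α i : ℝ) - (β j : ℝ)| ∧ |(α i : ℝ) - (β j : ℝ)| ≤ (1 + χ) * D i j) ∧
  (∀ i j, P i j = if 0 ≤ α i - β j then (1 : ℝ) else -1)

/-- The MWU weight `w_{i,j,σ} = exp(η·σ·P_{ij}·D_{ij}/C_{ij})`. -/
noncomputable def wt {n : ℕ} (η : ℝ) (C D P : Fin n → Fin n → ℝ)
    (i j : Fin n) (σ : ℝ) : ℝ :=
  Real.exp (η * (σ * P i j) * D i j / C i j)

/-- Total weight `W = ∑_{i,j,σ∈{−1,1}} w_{i,j,σ}`. -/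
noncomputable def totW {n : ℕ} (η : ℝ) (C D P : Fin n → Fin n → ℝ) : ℝ :=
  ∑ i, ∑ j, (wt η C D P i j 1 + wt η C D P i j (-1))

/-- The probability distribution `λ` proportional to the weights `w`. -/
noncomputable def lamOf {n : ℕ} (η : ℝ) (C D P : Fin n → Fin n → ℝ)
    (i j : Fin n) (σ : ℝ) : ℝ :=
  wt η C D P i j σ / totW η C D P

set_option maxHeartbeats 1600000

lemma exp_le_one_add_add_sq {x : ℝ} (h : |x| ≤ 1) : Real.exp x ≤ 1 + x + x ^ 2 := by
  have hb := Real.exp_bound h (n := 2) (by norm_num)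
  have h2 : ∑ i ∈ Finset.range 2, x ^ i / i.factorial = 1 + x := by
    simp [Finset.sum_range_succ]
  rw [h2] at hb
  have h3 := (abs_le.mp hb).2
  have hx2 : |x| ^ 2 = x ^ 2 := sq_abs x
  rw [hx2] at h3
  norm_num [Nat.factorial] at h3
  nlinarith [sq_nonneg x]

lemma abs_exp_sub_exp {a b δ : ℝ} (h : |a - b| ≤ δ) :
    |Real.exp a - Real.exp b| ≤ Real.exp b * (Real.exp δ - 1) := by
  obtain ⟨h1, h2⟩ := abs_sub_le_iff.mp h
  have hub : Real.exp a ≤ Real.exp b * Real.exp δ := by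
    rw [← Real.exp_add]; exact Real.exp_le_exp.mpr (by linarith)
  have hlb : Real.exp b * Real.exp (-δ) ≤ Real.exp a := by
    rw [← Real.exp_add]; exact Real.exp_le_exp.mpr (by linarith)
  have hsum : 2 ≤ Real.exp δ + Real.exp (-δ) := by
    nlinarith [Real.add_one_le_exp δ, Real.add_one_le_exp (-δ)]
  rw [abs_sub_le_iff]
  constructor <;> nlinarith [Real.exp_pos b]

lemma exp_sub_one_le_two_mul {δ : ℝ} (h0 : 0 ≤ δ) (h2 : Real.exp δ ≤ 2) :
    Real.exp δ - 1 ≤ 2 * δ := by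
  have h1 : 1 - δ ≤ Real.exp (-δ) := by linarith [Real.add_one_le_exp (-δ)]
  have hmul : Real.exp (-δ) * Real.exp δ = 1 := by
    rw [← Real.exp_add]; simp
  nlinarith [Real.exp_pos δ]

lemma mwu_round_step {n : ℕ} (x y g : Fin n → Fin n → ℝ)
    (η K γ v δ : ℝ)
    (hη : 0 ≤ η) (hK : 0 ≤ K) (hηK : η * K ≤ 1)
    (hγ0 : 0 ≤ γ) (hγK : γ ≤ K) (hv : |v| ≤ K)
    (hδ0 : 0 ≤ δ) (hδ2 : Real.exp δ ≤ 2)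
    (hxy : ∀ i j, |x i j - y i j| ≤ δ)
    (hg : ∀ i j, |g i j| ≤ K)
    (hyp : ∑ i, ∑ j, (Real.exp (y i j) - Real.exp (-(y i j))) * g i j ≤
      (∑ i, ∑ j, (Real.exp (y i j) + Real.exp (-(y i j)))) * (v - γ)) :
    ∑ i, ∑ j, (Real.exp (x i j + η * g i j) + Real.exp (-(x i j + η * g i j))) ≤
      (∑ i, ∑ j, (Real.exp (x i j) + Real.exp (-(x i j)))) *
        Real.exp (η * (v - γ) + 8 * η * K * δ + η ^ 2 * K ^ 2) := by
  set Wx := ∑ i, ∑ j, (Real.exp (x i j) + Real.exp (-(x i j))) with hWx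
  set Wy := ∑ i, ∑ j, (Real.exp (y i j) + Real.exp (-(y i j))) with hWy
  set Sx := ∑ i, ∑ j, (Real.exp (x i j) - Real.exp (-(x i j))) * g i j with hSx
  set Sy := ∑ i, ∑ j, (Real.exp (y i j) - Real.exp (-(y i j))) * g i j with hSy
  have hWx0 : 0 ≤ Wx := by
    rw [hWx]
    apply Finset.sum_nonneg; intro i _; apply Finset.sum_nonneg; intro j _; positivity
  have hE1 : 0 ≤ Real.exp δ - 1 := by linarith [Real.one_le_exp hδ0]
  -- Step 1 : expansion bound
  have step1 : ∑ i, ∑ j, (Real.exp (x i j + η * g i j) + Real.exp (-(x i j + η * g i j))) ≤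
      Wx * (1 + η ^ 2 * K ^ 2) + η * Sx := by
    have hsplit : ∑ i, ∑ j, ((Real.exp (x i j) + Real.exp (-(x i j))) * (1 + η ^ 2 * K ^ 2)
        + η * ((Real.exp (x i j) - Real.exp (-(x i j))) * g i j))
        = Wx * (1 + η ^ 2 * K ^ 2) + η * Sx := by
      rw [hWx, hSx, Finset.sum_mul, Finset.mul_sum, ← Finset.sum_add_distrib]
      refine Finset.sum_congr rfl fun i _ => ?_
      rw [Finset.sum_mul, Finset.mul_sum, ← Finset.sum_add_distrib]
    rw [← hsplit]
    apply Finset.sum_le_sum; intro i _; apply Finset.sum_le_sum; intro j _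
    have hgij := hg i j
    have habs : |η * g i j| ≤ 1 := by
      rw [abs_mul, abs_of_nonneg hη]
      calc η * |g i j| ≤ η * K := by nlinarith [abs_nonneg (g i j)]
        _ ≤ 1 := hηK
    have habs' : |-(η * g i j)| ≤ 1 := by rwa [abs_neg]
    have e1 := exp_le_one_add_add_sq habs
    have e2 := exp_le_one_add_add_sq habs'
    have hsq : (η * g i j) ^ 2 ≤ η ^ 2 * K ^ 2 := by
      have hh : (η * g i j)^2 = η^2 * (g i j)^2 := by ring
      rw [hh]
      have hg2 : (g i j)^2 ≤ K^2 := by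
        nlinarith [abs_nonneg (g i j), sq_abs (g i j), neg_abs_le (g i j), le_abs_self (g i j)]
      nlinarith [sq_nonneg η]
    have hx1 : Real.exp (x i j + η * g i j) = Real.exp (x i j) * Real.exp (η * g i j) := by
      rw [← Real.exp_add]
    have hx2 : Real.exp (-(x i j + η * g i j)) = Real.exp (-(x i j)) * Real.exp (-(η * g i j)) := by
      rw [← Real.exp_add]; ring_nf
    rw [hx1, hx2]
    have p1 := Real.exp_pos (x i j)
    have p2 := Real.exp_pos (-(x i j))
    nlinarith [mul_le_mul_of_nonneg_left e1 p1.le, mul_le_mul_of_nonneg_left e2 p2.le,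
      sq_nonneg (η * g i j)]
  -- Step 2 : Sx close to Sy
  have hSdiff : Sx - Sy ≤ K * (Real.exp δ - 1) * Wx := by
    have hdiff : Sx - Sy = ∑ i, ∑ j, ((Real.exp (x i j) - Real.exp (-(x i j))) * g i j
        - (Real.exp (y i j) - Real.exp (-(y i j))) * g i j) := by
      rw [hSx, hSy, ← Finset.sum_sub_distrib]
      exact Finset.sum_congr rfl fun i _ => (Finset.sum_sub_distrib ..).symm
    rw [hdiff, hWx, Finset.mul_sum]
    apply Finset.sum_le_sum; intro i _
    rw [Finset.mul_sum]
    apply Finset.sum_le_sum; intro j _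
    have d1 : |Real.exp (y i j) - Real.exp (x i j)| ≤ Real.exp (x i j) * (Real.exp δ - 1) :=
      abs_exp_sub_exp (by rw [abs_sub_comm]; exact hxy i j)
    have d2 : |Real.exp (-(y i j)) - Real.exp (-(x i j))| ≤ Real.exp (-(x i j)) * (Real.exp δ - 1) :=
      abs_exp_sub_exp (by
        have e : -(y i j) - -(x i j) = x i j - y i j := by ring
        rw [e]; exact hxy i j)
    have b1 : (Real.exp (x i j) - Real.exp (y i j)) * g i j
        ≤ Real.exp (x i j) * (Real.exp δ - 1) * K := by
      calc (Real.exp (x i j) - Real.exp (y i j)) * g i j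
          ≤ |(Real.exp (x i j) - Real.exp (y i j)) * g i j| := le_abs_self _
        _ = |Real.exp (y i j) - Real.exp (x i j)| * |g i j| := by
            rw [abs_mul, abs_sub_comm]
        _ ≤ Real.exp (x i j) * (Real.exp δ - 1) * K :=
            mul_le_mul d1 (hg i j) (abs_nonneg _)
              (mul_nonneg (Real.exp_pos _).le hE1)
    have b2 : (Real.exp (-(y i j)) - Real.exp (-(x i j))) * g i j
        ≤ Real.exp (-(x i j)) * (Real.exp δ - 1) * K := by
      calc (Real.exp (-(y i j)) - Real.exp (-(x i j))) * g i j
          ≤ |(Real.exp (-(y i j)) - Real.exp (-(x i j))) * g i j| := le_abs_self _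
        _ = |Real.exp (-(y i j)) - Real.exp (-(x i j))| * |g i j| := abs_mul _ _
        _ ≤ Real.exp (-(x i j)) * (Real.exp δ - 1) * K :=
            mul_le_mul d2 (hg i j) (abs_nonneg _)
              (mul_nonneg (Real.exp_pos _).le hE1)
    nlinarith [b1, b2]
  -- Step 3 : Wy close to Wx
  have hWdiff : |Wy - Wx| ≤ (Real.exp δ - 1) * Wx := by
    have hdiff : Wy - Wx = ∑ i, ∑ j, ((Real.exp (y i j) + Real.exp (-(y i j)))
        - (Real.exp (x i j) + Real.exp (-(x i j)))) := by
      rw [hWy, hWx, ← Finset.sum_sub_distrib]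
      exact Finset.sum_congr rfl fun i _ => (Finset.sum_sub_distrib ..).symm
    rw [hdiff]
    calc |∑ i, ∑ j, ((Real.exp (y i j) + Real.exp (-(y i j)))
        - (Real.exp (x i j) + Real.exp (-(x i j))))|
        ≤ ∑ i, ∑ j, |(Real.exp (y i j) + Real.exp (-(y i j)))
            - (Real.exp (x i j) + Real.exp (-(x i j)))| :=
          (Finset.abs_sum_le_sum_abs _ _).trans
            (Finset.sum_le_sum fun i _ => Finset.abs_sum_le_sum_abs _ _)
      _ ≤ (Real.exp δ - 1) * Wx := by
          rw [hWx, Finset.mul_sum]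
          apply Finset.sum_le_sum; intro i _
          rw [Finset.mul_sum]
          apply Finset.sum_le_sum; intro j _
          have d1 : |Real.exp (y i j) - Real.exp (x i j)| ≤ Real.exp (x i j) * (Real.exp δ - 1) :=
            abs_exp_sub_exp (by rw [abs_sub_comm]; exact hxy i j)
          have d2 : |Real.exp (-(y i j)) - Real.exp (-(x i j))|
              ≤ Real.exp (-(x i j)) * (Real.exp δ - 1) :=
            abs_exp_sub_exp (by
              have e : -(y i j) - -(x i j) = x i j - y i j := by ring
              rw [e]; exact hxy i j)
          have h5 : (Real.exp (y i j) + Real.exp (-(y i j)))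
              - (Real.exp (x i j) + Real.exp (-(x i j)))
              = (Real.exp (y i j) - Real.exp (x i j))
                + (Real.exp (-(y i j)) - Real.exp (-(x i j))) := by ring
          rw [h5]
          calc |(Real.exp (y i j) - Real.exp (x i j))
              + (Real.exp (-(y i j)) - Real.exp (-(x i j)))|
              ≤ |Real.exp (y i j) - Real.exp (x i j)|
                + |Real.exp (-(y i j)) - Real.exp (-(x i j))| := abs_add_le _ _
            _ ≤ (Real.exp δ - 1) * (Real.exp (x i j) + Real.exp (-(x i j))) := by
                nlinarith [d1, d2]
  -- Step 4 : combine
  have h3 : |v - γ| ≤ 2 * K := by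
    have h := abs_le.mp hv
    rw [abs_le]; constructor <;> linarith
  have h2 : (Wy - Wx) * (v - γ) ≤ |Wy - Wx| * |v - γ| := by
    calc (Wy - Wx) * (v - γ) ≤ |(Wy - Wx) * (v - γ)| := le_abs_self _
      _ = |Wy - Wx| * |v - γ| := abs_mul _ _
  have h4 : |Wy - Wx| * |v - γ| ≤ (Real.exp δ - 1) * Wx * (2 * K) :=
    mul_le_mul hWdiff h3 (abs_nonneg _) (mul_nonneg hE1 hWx0)
  have hSx_le : Sx ≤ Wx * ((v - γ) + 3 * K * (Real.exp δ - 1)) := by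
    nlinarith [hyp, h2, h4, hSdiff]
  have hδ2' : Real.exp δ - 1 ≤ 2 * δ := exp_sub_one_le_two_mul hδ0 hδ2
  have hz : Sx ≤ Wx * ((v - γ) + 6 * K * δ) := by
    nlinarith [hSx_le, mul_le_mul_of_nonneg_left hδ2' (mul_nonneg hWx0 hK)]
  have hfin : Wx * (1 + η ^ 2 * K ^ 2) + η * Sx
      ≤ Wx * (1 + (η * (v - γ) + 8 * η * K * δ + η ^ 2 * K ^ 2)) := by
    have h6 := mul_le_mul_of_nonneg_left hz hη
    nlinarith [mul_nonneg hWx0 (mul_nonneg (mul_nonneg hη hK) hδ0)]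
  calc ∑ i, ∑ j, (Real.exp (x i j + η * g i j) + Real.exp (-(x i j + η * g i j)))
      ≤ Wx * (1 + η ^ 2 * K ^ 2) + η * Sx := step1
    _ ≤ Wx * (1 + (η * (v - γ) + 8 * η * K * δ + η ^ 2 * K ^ 2)) := hfin
    _ ≤ Wx * Real.exp (η * (v - γ) + 8 * η * K * δ + η ^ 2 * K ^ 2) :=
        mul_le_mul_of_nonneg_left
          (by linarith [Real.add_one_le_exp (η * (v - γ) + 8 * η * K * δ + η ^ 2 * K ^ 2)]) hWx0

lemma final_arith (L R V a η γ K δ : ℝ)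
    (hη0 : 0 < η) (hγ0 : 0 < γ) (hRpos : 0 < R) (hRlarge : 100 ≤ R)
    (hb1 : 100 * L ≤ R * (η*γ))
    (hKδ : K*δ ≤ γ/10000) (hK0 : 0 < K) (hδ0 : 0 ≤ δ)
    (f1 : η*K^2 ≤ γ/100)
    (hkey2 : η * a ≤ L + (η * V + (R-1)*(8*η*K*δ + η^2*K^2 - η*γ))) :
    γ/10 * R ≤ V - a := by
  have hx : (0:ℝ) ≤ η*(K*δ) := mul_nonneg hη0.le (mul_nonneg hK0.le hδ0)
  have hy : η*(K*δ) ≤ η*(γ/10000) := mul_le_mul_of_nonneg_left hKδ hη0.le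
  have p1 : (R-1)*(8*η*K*δ) ≤ R*(8*η*K*δ) := by nlinarith [hx]
  have p2 : R*(8*η*K*δ) ≤ R*(8*η*(γ/10000)) := by
    nlinarith [mul_le_mul_of_nonneg_left hy (show (0:ℝ) ≤ 8*R by linarith)]
  have hx3 : (0:ℝ) ≤ η*(η*K^2) := mul_nonneg hη0.le (mul_nonneg hη0.le (by positivity))
  have hy3 : η*(η*K^2) ≤ η*(γ/100) := mul_le_mul_of_nonneg_left f1 hη0.le
  have q1 : (R-1)*(η^2*K^2) ≤ R*(η^2*K^2) := by nlinarith [hx3]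
  have q2 : R*(η^2*K^2) ≤ R*(η*(γ/100)) := by
    nlinarith [mul_le_mul_of_nonneg_left hy3 hRpos.le]
  have hb4 : η*γ ≤ R*(η*γ)/100 := by
    nlinarith [mul_nonneg (show (0:ℝ) ≤ R-100 by linarith) (mul_pos hη0 hγ0).le]
  have hfin : η*(γ/10*R) ≤ η*V - η*a := by nlinarith [hkey2, hb1, p1, p2, q1, q2, hb4]
  have h2 : η*(γ/10*R) ≤ η*(V - a) := by linarith [hfin]
  exact le_of_mul_le_mul_left h2 hη0

/-- the multiplicative weights update procedure, driven by any certification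
oracle outputs satisfying (i)–(iii), produces after `R` rounds an averaged dual solution
`(α, β) = (1/R)·(α^R, β^R)` lying in `Γ_t` with slack `γ/10`. -/
theorem mwu_produces_certificate :
    ∃ c₁ c₂ c₃ : ℝ, 0 < c₁ ∧ 0 < c₂ ∧ 0 < c₃ ∧
    ∀ (n : ℕ), 1 ≤ n →
    ∀ (t : ℝ), 0 < t →
    ∀ (C : Fin n → Fin n → ℝ), (∀ i j, 0 < C i j) →
    ∀ (K γ η : ℝ), 1 ≤ K → 0 < γ → γ ≤ K → 0 < η → η ≤ c₁ * γ / K ^ 2 →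
    ∀ (R : ℕ), c₂ * Real.log (2 * (n : ℝ) ^ 2) / (η * γ) ≤ (R : ℝ) →
    ∀ (χ : ℝ), χ ∈ Set.Ioo (0 : ℝ) 1 → χ ≤ c₃ * γ / ((R : ℝ) * K) →
    ∀ (α β αt βt : ℕ → Fin n → ℤ) (D P : ℕ → Fin n → Fin n → ℝ),
      α 1 = 0 → β 1 = 0 →
      (∀ r, 1 ≤ r → r ≤ R - 1 → IsRoundedDual χ (α r) (β r) (D r) (P r)) →
      (∀ r, 1 ≤ r → r ≤ R - 1 →
        (∑ i, ∑ j,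
          (lamOf η C (D r) (P r) i j 1 * (1 * (((αt r i : ℝ) - (βt r j : ℝ)) / C i j)) +
           lamOf η C (D r) (P r) i j (-1) *
             ((-1) * (((αt r i : ℝ) - (βt r j : ℝ)) / C i j)))) ≤
          (1 / t) * ((∑ i, (αt r i : ℝ)) - ∑ j, (βt r j : ℝ)) - γ) →
      (∀ r, 1 ≤ r → r ≤ R - 1 → ∀ i j, |(αt r i : ℝ) - (βt r j : ℝ)| ≤ K * C i j) →
      (∀ r, 1 ≤ r → r ≤ R - 1 →
        |(1 / t) * ((∑ i, (αt r i : ℝ)) - ∑ j, (βt r j : ℝ))| ≤ K) →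
      (∀ r, 1 ≤ r → r ≤ R - 1 → α (r + 1) = α r + αt r ∧ β (r + 1) = β r + βt r) →
      ∀ i j,
        γ / 10 ≤ (1 / t) * ((∑ i', (α R i' : ℝ) / R) - ∑ j', (β R j' : ℝ) / R) -
            |(α R i : ℝ) / R - (β R j : ℝ) / R| / C i j ∧
        0 < (1 / t) * ((∑ i', (α R i' : ℝ) / R) - ∑ j', (β R j' : ℝ) / R) -
            |(α R i : ℝ) / R - (β R j : ℝ) / R| / C i j := by
  refine ⟨1/100, 100, 1/100, by norm_num, by norm_num, by norm_num, ?_⟩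
  intro n hn t ht C hC K γ η hK1 hγ0 hγK hη0 hηc R hR χ hχI hχc
  intro α β αt βt D P hα1 hβ1 hRD hOr1 hOr2 hOr3 hstep i j
  obtain ⟨hχ0, hχ1⟩ := hχI
  haveI : NeZero n := ⟨by omega⟩
  have hK0 : (0:ℝ) < K := lt_of_lt_of_le one_pos hK1
  have hK2pos : (0:ℝ) < K^2 := by positivity
  have f1 : η * K^2 ≤ γ/100 := by
    have h := (le_div_iff₀ hK2pos).mp hηc
    linarith
  have f2 : η * K ≤ 1/100 := by
    have h' : (η*K)*K ≤ (1/100)*K := by nlinarith [f1, hγK]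
    exact le_of_mul_le_mul_right h' hK0
  have f3 : η * γ ≤ 1/100 := by nlinarith [hη0.le]
  have hηγpos : 0 < η * γ := mul_pos hη0 hγ0
  have f2' : η * K ≤ 1 := le_trans f2 (by norm_num)
  set L := Real.log (2 * (n:ℝ)^2) with hLdef
  have hn1 : (1:ℝ) ≤ n := by exact_mod_cast hn
  have h2n2 : (2:ℝ) ≤ 2*(n:ℝ)^2 := by nlinarith
  have h2n2pos : (0:ℝ) < 2*(n:ℝ)^2 := by positivity
  have hLlog2 : Real.log 2 ≤ L := Real.log_le_log (by norm_num) h2n2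
  have hlog2 : (0.6931471803:ℝ) < Real.log 2 := Real.log_two_gt_d9
  have hLpos : (0:ℝ) < L := by linarith
  have hRlarge : (100:ℝ) ≤ R := by
    have h1 : (100:ℝ) ≤ 1/(η*γ) := by
      rw [le_div_iff₀ hηγpos]; linarith
    have h2 : (100:ℝ) ≤ 100*L/(η*γ) := by
      have h3 : 100*L/(η*γ) = (100*L) * (1/(η*γ)) := by ring
      rw [h3]
      nlinarith [mul_le_mul (by linarith : (69:ℝ) ≤ 100*L) h1 (by norm_num) (by linarith)]
    linarith [hR]
  have hRpos : (0:ℝ) < R := by linarith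
  have hRN2 : 2 ≤ R := by exact_mod_cast (by linarith : (2:ℝ) ≤ (R:ℝ))
  have hRN1 : 1 ≤ R := by omega
  set δ := η * χ * (R:ℝ) * K with hδdef
  have hδ0 : 0 ≤ δ := by rw [hδdef]; positivity
  have hχRK : χ * ((R:ℝ) * K) ≤ γ/100 := by
    have hRK : (0:ℝ) < (R:ℝ)*K := by positivity
    have h := (le_div_iff₀ hRK).mp hχc
    linarith
  have hδηγ : δ ≤ η*γ/100 := by
    rw [hδdef]
    nlinarith [hη0.le, hχRK]
  have hδ1 : δ ≤ 1/10000 := by nlinarith [f3, hδηγ]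
  have hexpδ : Real.exp δ ≤ 2 := by
    have h := exp_le_one_add_add_sq (x := δ) (by rw [abs_of_nonneg hδ0]; linarith)
    nlinarith [h, hδ0]
  have hKδ : K * δ ≤ γ/10000 := by
    nlinarith [mul_le_mul_of_nonneg_left hδηγ hK0.le,
      mul_le_mul_of_nonneg_right f2 hγ0.le]
  -- cumulative sums
  have hsum : ∀ r, 1 ≤ r → r ≤ R →
      (∀ i0, α r i0 = ∑ s ∈ Finset.Ico 1 r, αt s i0) ∧
      (∀ j0, β r j0 = ∑ s ∈ Finset.Ico 1 r, βt s j0) := by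
    intro r hr
    induction r, hr using Nat.le_induction with
    | base =>
      intro _
      constructor <;> intro k <;> simp [hα1, hβ1]
    | succ r hr ih =>
      intro hrR
      obtain ⟨ih1, ih2⟩ := ih (by omega)
      obtain ⟨hs1, hs2⟩ := hstep r hr (by omega)
      constructor <;> intro k
      · rw [Finset.sum_Ico_succ_top hr, hs1]
        simp only [Pi.add_apply]
        rw [ih1 k]
      · rw [Finset.sum_Ico_succ_top hr, hs2]
        simp only [Pi.add_apply]
        rw [ih2 k]
  have hAeq : ∀ r, 1 ≤ r → r ≤ R → ∀ i0 j0, ((α r i0 : ℝ) - (β r j0 : ℝ))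
      = ∑ s ∈ Finset.Ico 1 r, ((αt s i0 : ℝ) - (βt s j0 : ℝ)) := by
    intro r h1 h2 i0 j0
    obtain ⟨e1, e2⟩ := hsum r h1 h2
    rw [Finset.sum_sub_distrib]
    have c1 : (α r i0 : ℝ) = ∑ s ∈ Finset.Ico 1 r, ((αt s i0 : ℝ)) := by
      exact_mod_cast congrArg (Int.cast : ℤ → ℝ) (e1 i0)
    have c2 : (β r j0 : ℝ) = ∑ s ∈ Finset.Ico 1 r, ((βt s j0 : ℝ)) := by
      exact_mod_cast congrArg (Int.cast : ℤ → ℝ) (e2 j0)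
    rw [c1, c2]
  have hAbound : ∀ r, 1 ≤ r → r ≤ R → ∀ i0 j0,
      |(α r i0 : ℝ) - (β r j0 : ℝ)| ≤ ((r:ℝ)-1) * (K * C i0 j0) := by
    intro r h1 h2 i0 j0
    rw [hAeq r h1 h2 i0 j0]
    calc |∑ s ∈ Finset.Ico 1 r, ((αt s i0 : ℝ) - (βt s j0 : ℝ))|
        ≤ ∑ s ∈ Finset.Ico 1 r, |(αt s i0 : ℝ) - (βt s j0 : ℝ)| :=
          Finset.abs_sum_le_sum_abs _ _
      _ ≤ ∑ s ∈ Finset.Ico 1 r, K * C i0 j0 := by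
          refine Finset.sum_le_sum fun s hs => ?_
          obtain ⟨hs1, hs2⟩ := Finset.mem_Ico.mp hs
          exact hOr2 s hs1 (by omega) i0 j0
      _ = ((r:ℝ)-1) * (K * C i0 j0) := by
          rw [Finset.sum_const, Nat.card_Ico, nsmul_eq_mul]
          congr 1
          rw [Nat.cast_sub h1]
          simp
  -- main potential bound
  have key : ∀ r, 1 ≤ r → r ≤ R →
      (∑ i0, ∑ j0, (Real.exp (η * ((α r i0 : ℝ) - (β r j0 : ℝ)) / C i0 j0)
        + Real.exp (-(η * ((α r i0 : ℝ) - (β r j0 : ℝ)) / C i0 j0))))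
      ≤ 2*(n:ℝ)^2 * Real.exp (η * (∑ s ∈ Finset.Ico 1 r,
          ((1/t) * ((∑ i0, (αt s i0 : ℝ)) - ∑ j0, (βt s j0 : ℝ))))
          + ((r:ℝ)-1) * (8*η*K*δ + η^2*K^2 - η*γ)) := by
    intro r hr
    induction r, hr using Nat.le_induction with
    | base =>
      intro _
      simp only [hα1, hβ1, Pi.zero_apply, Int.cast_zero, sub_self, mul_zero, zero_div,
        Finset.Ico_self, Finset.sum_empty, Nat.cast_one, zero_mul, add_zero,
        neg_zero, Real.exp_zero, mul_one, Finset.sum_const, Finset.card_univ,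
        Fintype.card_fin, nsmul_eq_mul]
      push_cast
      nlinarith [hn1]
    | succ r hr ih =>
      intro hr1R
      have hrR1 : r ≤ R - 1 := by omega
      have ihr := ih (by omega)
      have hv := hOr3 r hr hrR1
      have hyp0 := hOr1 r hr hrR1
      obtain ⟨hDrnd, hD2, hP⟩ := hRD r hr hrR1
      -- rewriting totW
      have hWtot : totW η C (D r) (P r) = ∑ i0, ∑ j0,
          (Real.exp (η * (1 * P r i0 j0) * D r i0 j0 / C i0 j0)
            + Real.exp (-(η * (1 * P r i0 j0) * D r i0 j0 / C i0 j0))) := by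
        simp only [totW, wt]
        refine Finset.sum_congr rfl fun i0 _ => Finset.sum_congr rfl fun j0 _ => ?_
        congr 1
        exact congrArg Real.exp (by ring)
      have hWpos : 0 < totW η C (D r) (P r) := by
        rw [hWtot]
        refine Finset.sum_pos (fun i0 _ => ?_) Finset.univ_nonempty
        refine Finset.sum_pos (fun j0 _ => ?_) Finset.univ_nonempty
        positivity
      -- hypothesis (i) in weight form
      have hyp1 : ∑ i0, ∑ j0, (Real.exp (η * (1 * P r i0 j0) * D r i0 j0 / C i0 j0)
            - Real.exp (-(η * (1 * P r i0 j0) * D r i0 j0 / C i0 j0)))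
            * (((αt r i0 : ℝ) - (βt r j0 : ℝ)) / C i0 j0)
          ≤ (∑ i0, ∑ j0, (Real.exp (η * (1 * P r i0 j0) * D r i0 j0 / C i0 j0)
            + Real.exp (-(η * (1 * P r i0 j0) * D r i0 j0 / C i0 j0))))
            * ((1/t) * ((∑ i0, (αt r i0 : ℝ)) - ∑ j0, (βt r j0 : ℝ)) - γ) := by
        have heq : (∑ i0, ∑ j0,
            (lamOf η C (D r) (P r) i0 j0 1 * (1 * (((αt r i0 : ℝ) - (βt r j0 : ℝ)) / C i0 j0)) +
             lamOf η C (D r) (P r) i0 j0 (-1) *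
               ((-1) * (((αt r i0 : ℝ) - (βt r j0 : ℝ)) / C i0 j0))))
            = (∑ i0, ∑ j0, (Real.exp (η * (1 * P r i0 j0) * D r i0 j0 / C i0 j0)
              - Real.exp (-(η * (1 * P r i0 j0) * D r i0 j0 / C i0 j0)))
              * (((αt r i0 : ℝ) - (βt r j0 : ℝ)) / C i0 j0)) / totW η C (D r) (P r) := by
          rw [Finset.sum_div]
          refine Finset.sum_congr rfl fun i0 _ => ?_
          rw [Finset.sum_div]
          refine Finset.sum_congr rfl fun j0 _ => ?_
          simp only [lamOf, wt]
          rw [show η * (-1 * P r i0 j0) * D r i0 j0 / C i0 j0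
            = -(η * (1 * P r i0 j0) * D r i0 j0 / C i0 j0) by ring]
          ring
        rw [heq, div_le_iff₀ hWpos] at hyp0
        rw [← hWtot]
        calc _ ≤ ((1/t) * ((∑ i0, (αt r i0 : ℝ)) - ∑ j0, (βt r j0 : ℝ)) - γ)
            * totW η C (D r) (P r) := hyp0
          _ = _ := by ring
      -- the slope bounds
      have hgK : ∀ i0 j0, |((αt r i0 : ℝ) - (βt r j0 : ℝ)) / C i0 j0| ≤ K := by
        intro i0 j0
        rw [abs_div, abs_of_pos (hC i0 j0), div_le_iff₀ (hC i0 j0)]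
        exact hOr2 r hr hrR1 i0 j0
      -- rounding error bound
      have hxy : ∀ i0 j0, |η * ((α r i0 : ℝ) - (β r j0 : ℝ)) / C i0 j0
          - η * (1 * P r i0 j0) * D r i0 j0 / C i0 j0| ≤ δ := by
        intro i0 j0
        have hCij := hC i0 j0
        obtain ⟨hd1, hd2⟩ := hD2 i0 j0
        have hAb := hAbound r hr (by omega) i0 j0
        have hrR : ((r:ℝ)-1) ≤ (R:ℝ) := by
          have h : (r:ℝ) ≤ (R:ℝ) := by exact_mod_cast (by omega : r ≤ R)
          linarith
        rw [hP i0 j0]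
        split_ifs with hc
        · have hA0 : (0:ℝ) ≤ (α r i0 : ℝ) - (β r j0 : ℝ) := by
            have h : ((α r i0 - β r j0 : ℤ) : ℝ) ≥ 0 := by exact_mod_cast hc
            push_cast at h
            linarith
          rw [abs_of_nonneg hA0] at hd1 hd2 hAb
          rw [show η * ((α r i0 : ℝ) - (β r j0 : ℝ)) / C i0 j0
              - η * (1 * 1) * D r i0 j0 / C i0 j0
              = η * (((α r i0 : ℝ) - (β r j0 : ℝ)) - D r i0 j0) / C i0 j0 by ring]
          have hnum : (0:ℝ) ≤ η * (((α r i0 : ℝ) - (β r j0 : ℝ)) - D r i0 j0) := by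
            nlinarith [hη0.le]
          rw [abs_of_nonneg (div_nonneg hnum hCij.le), div_le_iff₀ hCij, hδdef]
          have k1 : ((α r i0 : ℝ) - (β r j0 : ℝ)) - D r i0 j0
              ≤ χ * (((α r i0 : ℝ) - (β r j0 : ℝ))) := by nlinarith [hχ0.le]
          have m1 := mul_le_mul_of_nonneg_left k1 hη0.le
          have m2 := mul_le_mul_of_nonneg_left hAb (mul_nonneg hη0.le hχ0.le)
          have m3 := mul_le_mul_of_nonneg_left hrR
            (by positivity : (0:ℝ) ≤ η*χ*(K*C i0 j0))
          linarith [m1, m2, m3]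
        · have hA0 : (α r i0 : ℝ) - (β r j0 : ℝ) < 0 := by
            have h : ((α r i0 - β r j0 : ℤ) : ℝ) < 0 := by exact_mod_cast (by omega : α r i0 - β r j0 < 0)
            push_cast at h
            linarith
          rw [abs_of_neg hA0] at hd1 hd2 hAb
          rw [show η * ((α r i0 : ℝ) - (β r j0 : ℝ)) / C i0 j0
              - η * (1 * (-1)) * D r i0 j0 / C i0 j0
              = -(η * ((-((α r i0 : ℝ) - (β r j0 : ℝ))) - D r i0 j0) / C i0 j0) by ring]
          have hnum : (0:ℝ) ≤ η * ((-((α r i0 : ℝ) - (β r j0 : ℝ))) - D r i0 j0) := by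
            nlinarith [hη0.le]
          rw [abs_neg, abs_of_nonneg (div_nonneg hnum hCij.le), div_le_iff₀ hCij, hδdef]
          have k1 : (-((α r i0 : ℝ) - (β r j0 : ℝ))) - D r i0 j0
              ≤ χ * (-((α r i0 : ℝ) - (β r j0 : ℝ))) := by nlinarith [hχ0.le]
          have m1 := mul_le_mul_of_nonneg_left k1 hη0.le
          have m2 := mul_le_mul_of_nonneg_left hAb (mul_nonneg hη0.le hχ0.le)
          have m3 := mul_le_mul_of_nonneg_left hrR
            (by positivity : (0:ℝ) ≤ η*χ*(K*C i0 j0))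
          linarith [m1, m2, m3]
      have hrs := mwu_round_step
        (fun i0 j0 => η * ((α r i0 : ℝ) - (β r j0 : ℝ)) / C i0 j0)
        (fun i0 j0 => η * (1 * P r i0 j0) * D r i0 j0 / C i0 j0)
        (fun i0 j0 => ((αt r i0 : ℝ) - (βt r j0 : ℝ)) / C i0 j0)
        η K γ ((1/t) * ((∑ i0, (αt r i0 : ℝ)) - ∑ j0, (βt r j0 : ℝ))) δ
        hη0.le hK0.le f2' hγ0.le hγK hv hδ0 hexpδ hxy hgK hyp1
      have hexp2 : ∀ i0 j0, η * ((α (r+1) i0 : ℝ) - (β (r+1) j0 : ℝ)) / C i0 j0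
          = η * ((α r i0 : ℝ) - (β r j0 : ℝ)) / C i0 j0
            + η * (((αt r i0 : ℝ) - (βt r j0 : ℝ)) / C i0 j0) := by
        intro i0 j0
        obtain ⟨hs1, hs2⟩ := hstep r hr hrR1
        rw [hs1, hs2]
        simp only [Pi.add_apply]
        push_cast
        ring
      calc (∑ i0, ∑ j0, (Real.exp (η * ((α (r+1) i0 : ℝ) - (β (r+1) j0 : ℝ)) / C i0 j0)
            + Real.exp (-(η * ((α (r+1) i0 : ℝ) - (β (r+1) j0 : ℝ)) / C i0 j0))))
          = ∑ i0, ∑ j0, (Real.exp (η * ((α r i0 : ℝ) - (β r j0 : ℝ)) / C i0 j0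
              + η * (((αt r i0 : ℝ) - (βt r j0 : ℝ)) / C i0 j0))
            + Real.exp (-(η * ((α r i0 : ℝ) - (β r j0 : ℝ)) / C i0 j0
              + η * (((αt r i0 : ℝ) - (βt r j0 : ℝ)) / C i0 j0)))) := by
            refine Finset.sum_congr rfl fun i0 _ => Finset.sum_congr rfl fun j0 _ => ?_
            rw [hexp2 i0 j0]
        _ ≤ (∑ i0, ∑ j0, (Real.exp (η * ((α r i0 : ℝ) - (β r j0 : ℝ)) / C i0 j0)
              + Real.exp (-(η * ((α r i0 : ℝ) - (β r j0 : ℝ)) / C i0 j0)))) *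
            Real.exp (η * ((1/t) * ((∑ i0, (αt r i0 : ℝ)) - ∑ j0, (βt r j0 : ℝ)) - γ)
              + 8*η*K*δ + η^2*K^2) := hrs
        _ ≤ (2*(n:ℝ)^2 * Real.exp (η * (∑ s ∈ Finset.Ico 1 r,
              ((1/t) * ((∑ i0, (αt s i0 : ℝ)) - ∑ j0, (βt s j0 : ℝ))))
              + ((r:ℝ)-1) * (8*η*K*δ + η^2*K^2 - η*γ))) *
            Real.exp (η * ((1/t) * ((∑ i0, (αt r i0 : ℝ)) - ∑ j0, (βt r j0 : ℝ)) - γ)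
              + 8*η*K*δ + η^2*K^2) :=
            mul_le_mul_of_nonneg_right ihr (Real.exp_pos _).le
        _ = 2*(n:ℝ)^2 * Real.exp (η * (∑ s ∈ Finset.Ico 1 (r+1),
              ((1/t) * ((∑ i0, (αt s i0 : ℝ)) - ∑ j0, (βt s j0 : ℝ))))
              + (((r+1:ℕ):ℝ)-1) * (8*η*K*δ + η^2*K^2 - η*γ)) := by
            rw [mul_assoc, ← Real.exp_add]
            congr 2
            rw [Finset.sum_Ico_succ_top hr]
            push_cast
            ring
  -- conclusion
  have hfinal := key R hRN1 le_rfl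
  have hterm : Real.exp (η * |(α R i : ℝ) - (β R j : ℝ)| / C i j)
      ≤ Real.exp (η * ((α R i : ℝ) - (β R j : ℝ)) / C i j)
        + Real.exp (-(η * ((α R i : ℝ) - (β R j : ℝ)) / C i j)) := by
    rcases abs_cases ((α R i : ℝ) - (β R j : ℝ)) with ⟨h1, h2⟩ | ⟨h1, h2⟩
    · rw [h1]
      linarith [Real.exp_pos (-(η * ((α R i : ℝ) - (β R j : ℝ)) / C i j))]
    · rw [h1, show η * (-((α R i : ℝ) - (β R j : ℝ))) / C i j
        = -(η * ((α R i : ℝ) - (β R j : ℝ)) / C i j) by ring]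
      linarith [Real.exp_pos (η * ((α R i : ℝ) - (β R j : ℝ)) / C i j)]
  have hsingle : Real.exp (η * |(α R i : ℝ) - (β R j : ℝ)| / C i j)
      ≤ ∑ i0, ∑ j0, (Real.exp (η * ((α R i0 : ℝ) - (β R j0 : ℝ)) / C i0 j0)
        + Real.exp (-(η * ((α R i0 : ℝ) - (β R j0 : ℝ)) / C i0 j0))) := by
    calc Real.exp (η * |(α R i : ℝ) - (β R j : ℝ)| / C i j)
        ≤ Real.exp (η * ((α R i : ℝ) - (β R j : ℝ)) / C i j)
          + Real.exp (-(η * ((α R i : ℝ) - (β R j : ℝ)) / C i j)) := hterm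
      _ ≤ ∑ j0, (Real.exp (η * ((α R i : ℝ) - (β R j0 : ℝ)) / C i j0)
          + Real.exp (-(η * ((α R i : ℝ) - (β R j0 : ℝ)) / C i j0))) :=
          Finset.single_le_sum (f := fun j0 => Real.exp (η * ((α R i : ℝ) - (β R j0 : ℝ)) / C i j0)
            + Real.exp (-(η * ((α R i : ℝ) - (β R j0 : ℝ)) / C i j0)))
            (fun j0 _ => by positivity) (Finset.mem_univ j)
      _ ≤ ∑ i0, ∑ j0, (Real.exp (η * ((α R i0 : ℝ) - (β R j0 : ℝ)) / C i0 j0)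
          + Real.exp (-(η * ((α R i0 : ℝ) - (β R j0 : ℝ)) / C i0 j0))) :=
          Finset.single_le_sum (f := fun i0 => ∑ j0,
            (Real.exp (η * ((α R i0 : ℝ) - (β R j0 : ℝ)) / C i0 j0)
            + Real.exp (-(η * ((α R i0 : ℝ) - (β R j0 : ℝ)) / C i0 j0))))
            (fun i0 _ => by positivity) (Finset.mem_univ i)
  have hexp_le : Real.exp (η * |(α R i : ℝ) - (β R j : ℝ)| / C i j)
      ≤ Real.exp (L + (η * (∑ s ∈ Finset.Ico 1 R,
          ((1/t) * ((∑ i0, (αt s i0 : ℝ)) - ∑ j0, (βt s j0 : ℝ))))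
          + ((R:ℝ)-1) * (8*η*K*δ + η^2*K^2 - η*γ))) := by
    rw [Real.exp_add, hLdef, Real.exp_log h2n2pos]
    exact le_trans hsingle hfinal
  have hkey2 : η * |(α R i : ℝ) - (β R j : ℝ)| / C i j
      ≤ L + (η * (∑ s ∈ Finset.Ico 1 R,
          ((1/t) * ((∑ i0, (αt s i0 : ℝ)) - ∑ j0, (βt s j0 : ℝ))))
          + ((R:ℝ)-1) * (8*η*K*δ + η^2*K^2 - η*γ)) := Real.exp_le_exp.mp hexp_le
  have hV : (∑ s ∈ Finset.Ico 1 R,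
          ((1/t) * ((∑ i0, (αt s i0 : ℝ)) - ∑ j0, (βt s j0 : ℝ))))
      = (1/t) * ((∑ i0, (α R i0 : ℝ)) - ∑ j0, (β R j0 : ℝ)) := by
    rw [← Finset.mul_sum]
    congr 1
    rw [Finset.sum_sub_distrib]
    congr 1
    · rw [Finset.sum_comm]
      refine Finset.sum_congr rfl fun i0 _ => ?_
      have h := (hsum R hRN1 le_rfl).1 i0
      exact_mod_cast (congrArg (Int.cast : ℤ → ℝ) h).symm
    · rw [Finset.sum_comm]
      refine Finset.sum_congr rfl fun j0 _ => ?_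
      have h := (hsum R hRN1 le_rfl).2 j0
      exact_mod_cast (congrArg (Int.cast : ℤ → ℝ) h).symm
  rw [hV] at hkey2
  -- final arithmetic
  have hgoal_eq : (1/t) * ((∑ i', (α R i' : ℝ)/(R:ℝ)) - ∑ j', (β R j' : ℝ)/(R:ℝ))
      - |(α R i : ℝ)/(R:ℝ) - (β R j : ℝ)/(R:ℝ)| / C i j
      = ((1/t) * ((∑ i0, (α R i0 : ℝ)) - ∑ j0, (β R j0 : ℝ))
        - |(α R i : ℝ) - (β R j : ℝ)| / C i j) / (R:ℝ) := by
    rw [div_sub_div_same, abs_div, abs_of_pos hRpos, ← Finset.sum_div, ← Finset.sum_div]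
    ring
  rw [hgoal_eq]
  have hmain : γ / 10 ≤ ((1/t) * ((∑ i0, (α R i0 : ℝ)) - ∑ j0, (β R j0 : ℝ))
      - |(α R i : ℝ) - (β R j : ℝ)| / C i j) / (R:ℝ) := by
    rw [le_div_iff₀ hRpos]
    have ha' : η * |(α R i : ℝ) - (β R j : ℝ)| / C i j
        = η * (|(α R i : ℝ) - (β R j : ℝ)| / C i j) := by ring
    rw [ha'] at hkey2
    have hb1 : 100 * L ≤ (R:ℝ) * (η*γ) := by
      have h := (div_le_iff₀ hηγpos).mp hR
      linarith
    exact final_arith L (R:ℝ) _ _ η γ K δ hη0 hγ0 hRpos hRlarge hb1 hKδ hK0 hδ0 f1 hkey2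
  exact ⟨hmain, lt_of_lt_of_le (by linarith) hmain⟩
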